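/- For any sequence of positive integers p_1,...,p_t, the function F_{p_1,...,p_t}(n) = \sum_{0 \le k_1 < k_2 < \dots < k_t \le n-1} k_1^{p_1} k_2^{p_2} \cdots k_t^{p_t} agrees with a polynomial in n of degree p_1 + p_2 + \dots + p_t + t. -/

import Mathlib

open Polynomial Finset

lemma telescope (d : ℕ) : ∀ n : ℕ,
    ∑ k ∈ range n, (descPochhammer ℚ d).eval (k : ℚ)
      = (descPochhammer ℚ (d+1)).eval (n : ℚ) / (d+1) := by
  intro n
  induction n with
  | zero => simp
  | succ n ih =>
    rw [Finset.sum_range_succ, ih]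
    have h1 : (descPochhammer ℚ (d+1)).eval ((n:ℚ)+1)
        = ((n:ℚ)+1) * (descPochhammer ℚ d).eval ((n:ℚ)+1-1) := by
      rw [descPochhammer_succ_left]; simp [eval_comp]
    have h2 : (descPochhammer ℚ (d+1)).eval (n:ℚ)
        = (descPochhammer ℚ d).eval (n:ℚ) * ((n:ℚ) - d) := descPochhammer_succ_eval d _
    push_cast
    rw [h1, h2]
    field_simp
    ring

lemma indef_aux : ∀ D : ℕ, ∀ Q : Polynomial ℚ, Q.natDegree ≤ D →
    ∃ P : Polynomial ℚ, P.degree ≤ (D+1 : ℕ) ∧ P.coeff (D+1) = Q.coeff D / (D+1) ∧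
      ∀ n : ℕ, P.eval (n : ℚ) = ∑ k ∈ range n, Q.eval (k : ℚ) := by
  intro D
  induction D with
  | zero =>
    intro Q hQ
    refine ⟨C (Q.coeff 0) * X, ?_, ?_, ?_⟩
    · refine le_trans (degree_mul_le _ _) ?_
      refine le_trans (add_le_add degree_C_le (le_of_eq degree_X)) ?_
      simp
    · simp
    · intro n
      have he : ∀ x : ℚ, Q.eval x = Q.coeff 0 := by
        intro x
        conv_lhs => rw [eq_C_of_natDegree_le_zero hQ]
        simp
      simp only [eval_mul, eval_C, eval_X, he, Finset.sum_const, Finset.card_range,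
        nsmul_eq_mul]
      ring
  | succ D ih =>
    intro Q hQ
    set c := Q.coeff (D+1) with hc
    set R := Q - C c * descPochhammer ℚ (D+1) with hR
    have hm : (descPochhammer ℚ (D+1)).Monic := monic_descPochhammer ℚ (D+1)
    have hdeg : (descPochhammer ℚ (D+1)).natDegree = D+1 := descPochhammer_natDegree _ _
    have hd2 : (descPochhammer ℚ (D+2)).degree = ((D+2:ℕ) : WithBot ℕ) := by
      rw [degree_eq_natDegree (monic_descPochhammer ℚ (D+2)).ne_zero,
        descPochhammer_natDegree]
    have hRdeg : R.natDegree ≤ D := by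
      apply Polynomial.natDegree_le_iff_coeff_eq_zero.mpr
      intro e he
      rcases eq_or_lt_of_le (Nat.succ_le_of_lt he) with h | h
      · rw [hR]
        simp only [coeff_sub, coeff_C_mul]
        rw [← h]
        have h1 : (descPochhammer ℚ (D+1)).coeff (D+1) = 1 := by
          have := hm.leadingCoeff
          rwa [leadingCoeff, hdeg] at this
        rw [h1, mul_one, ← hc, sub_self]
      · rw [hR]
        simp only [coeff_sub, coeff_C_mul]
        rw [Polynomial.coeff_eq_zero_of_natDegree_lt (lt_of_le_of_lt hQ h),
            Polynomial.coeff_eq_zero_of_natDegree_lt (by rw [hdeg]; exact h)]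
        ring
    obtain ⟨P₀, hP₀deg, hP₀coeff, hP₀eval⟩ := ih R hRdeg
    refine ⟨C (c / (D+2)) * descPochhammer ℚ (D+2) + P₀, ?_, ?_, ?_⟩
    · refine le_trans (degree_add_le _ _) (max_le ?_ ?_)
      · refine le_trans (degree_mul_le _ _) ?_
        rw [hd2]
        refine le_trans (add_le_add_left degree_C_le _) ?_
        rw [zero_add]
      · exact le_trans hP₀deg (by exact_mod_cast Nat.le_succ (D+1))
    · have h1 : (descPochhammer ℚ (D+2)).coeff (D+2) = 1 := by
        have := (monic_descPochhammer ℚ (D+2)).leadingCoeff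
        rwa [leadingCoeff, descPochhammer_natDegree] at this
      have h2 : P₀.coeff (D+2) = 0 :=
        coeff_eq_zero_of_degree_lt (lt_of_le_of_lt hP₀deg
          (by exact_mod_cast Nat.lt_succ_self (D+1)))
      simp only [coeff_add, coeff_C_mul, h1, h2, mul_one, add_zero]
      all_goals push_cast
      all_goals ring
    · intro n
      have hQeq : ∀ x : ℚ, Q.eval x = c * (descPochhammer ℚ (D+1)).eval x + R.eval x := by
        intro x; rw [hR]; simp
        all_goals ring
      have h22 : D + 1 + 1 = D + 2 := rfl
      simp only [hQeq]
      rw [Finset.sum_add_distrib, ← Finset.mul_sum, telescope, ← hP₀eval n, h22]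
      simp only [eval_add, eval_mul, eval_C]
      have hne : ((D:ℚ) + 2) ≠ 0 := by positivity
      push_cast
      field_simp
      ring


lemma sigma_ext {t a b : ℕ} (k1 : Fin t → Fin a) (k2 : Fin t → Fin b) (h : a = b)
    (hv : ∀ i, (k1 i : ℕ) = (k2 i : ℕ)) :
    (⟨a, k1⟩ : (i : ℕ) × (Fin t → Fin i)) = ⟨b, k2⟩ := by
  subst h
  exact congrArg _ (funext fun i => Fin.ext (hv i))

lemma comb_step (t n : ℕ) (p : Fin (t+1) → ℕ) :
    ∑ k ∈ Finset.univ.filter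
        (fun k : Fin (t+1) → Fin n => ∀ i j, i < j → k i < k j),
      ∏ i, ((k i : ℕ) : ℚ) ^ p i
    = ∑ m ∈ range n, ((m : ℚ) ^ (p (Fin.last t)) *
        ∑ k ∈ Finset.univ.filter
          (fun k : Fin t → Fin m => ∀ i j, i < j → k i < k j),
        ∏ i, ((k i : ℕ) : ℚ) ^ p (Fin.castSucc i)) := by
  -- push constant into the inner sum
  have hrhs : ∀ m ∈ range n, ((m : ℚ) ^ (p (Fin.last t)) *
        ∑ k ∈ Finset.univ.filter
          (fun k : Fin t → Fin m => ∀ i j, i < j → k i < k j),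
        ∏ i, ((k i : ℕ) : ℚ) ^ p (Fin.castSucc i))
      = ∑ k ∈ Finset.univ.filter
          (fun k : Fin t → Fin m => ∀ i j, i < j → k i < k j),
        ((m : ℚ) ^ (p (Fin.last t)) * ∏ i, ((k i : ℕ) : ℚ) ^ p (Fin.castSucc i)) := by
    intro m _; rw [Finset.mul_sum]
  rw [Finset.sum_congr rfl hrhs, Finset.sum_sigma']
  refine Finset.sum_bij'
    (fun (k : Fin (t+1) → Fin n) (hk : k ∈ _) =>
      (⟨(k (Fin.last t) : ℕ), fun i =>
        (⟨(k (Fin.castSucc i) : ℕ), by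
          have := (Finset.mem_filter.mp hk).2 (Fin.castSucc i) (Fin.last t)
            (Fin.castSucc_lt_last i)
          exact this⟩ : Fin (k (Fin.last t) : ℕ))⟩ :
        (m : ℕ) × (Fin t → Fin m)))
    (fun (q : (m : ℕ) × (Fin t → Fin m)) (hq : q ∈ _) =>
      Fin.snoc (fun i => (⟨(q.2 i : ℕ), by
          have hm : q.1 < n := by
            have := (Finset.mem_sigma.mp hq).1
            simpa using this
          exact lt_trans (q.2 i).isLt hm⟩ : Fin n))
        (⟨q.1, by
          have := (Finset.mem_sigma.mp hq).1
          simpa using this⟩))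
    ?_ ?_ ?_ ?_ ?_
  · intro k hk
    rw [Finset.mem_filter] at hk
    rw [Finset.mem_sigma]
    constructor
    · simpa using (k (Fin.last t)).isLt
    · rw [Finset.mem_filter]
      refine ⟨Finset.mem_univ _, ?_⟩
      intro i j hij
      have := hk.2 (Fin.castSucc i) (Fin.castSucc j) (by simpa using hij)
      exact this
  · intro q hq
    rw [Finset.mem_sigma, Finset.mem_filter] at hq
    rw [Finset.mem_filter]
    refine ⟨Finset.mem_univ _, ?_⟩
    intro i j hij
    induction j using Fin.lastCases with
    | last =>
      induction i using Fin.lastCases with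
      | last => exact absurd hij (lt_irrefl _)
      | cast i' =>
        simp only [Fin.snoc_castSucc, Fin.snoc_last, Fin.lt_iff_val_lt_val]
        exact (q.2 i').isLt
    | cast j' =>
      induction i using Fin.lastCases with
      | last => exact absurd hij (not_lt.mpr (Fin.castSucc_lt_last j').le)
      | cast i' =>
        simp only [Fin.snoc_castSucc, Fin.lt_iff_val_lt_val]
        exact hq.2.2 i' j' (by simpa using hij)
  · intro k hk
    funext j
    induction j using Fin.lastCases with
    | last =>
      simp only [Fin.snoc_last]
    | cast j' =>
      simp only [Fin.snoc_castSucc]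
  · intro q hq
    obtain ⟨m, k'⟩ := q
    refine sigma_ext _ _ (by simp) (fun i => by simp)
  · intro k hk
    rw [Fin.prod_univ_castSucc]
    simp only [Fin.snoc_last, Fin.snoc_castSucc]
    exact mul_comm _ _


lemma main_aux : ∀ t : ℕ, ∀ p : Fin t → ℕ,
    ∃ Q : Polynomial ℚ, Q.degree = ((∑ i, p i) + t : ℕ) ∧
      ∀ n : ℕ, Q.eval (n : ℚ) =
        ∑ k ∈ Finset.univ.filter (fun k : Fin t → Fin n => ∀ i j, i < j → k i < k j),
          ∏ i, ((k i : ℕ) : ℚ) ^ p i := by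
  intro t
  induction t with
  | zero =>
    intro p
    refine ⟨1, by simp, ?_⟩
    intro n
    rw [Finset.filter_true_of_mem (fun k _ => fun i => i.elim0)]
    simp
  | succ t ih =>
    intro p
    obtain ⟨P, hPdeg, hPeval⟩ := ih (fun i => p (Fin.castSucc i))
    have hP0 : P ≠ 0 := by
      intro h
      rw [h, degree_zero] at hPdeg
      exact WithBot.bot_ne_coe hPdeg
    set Q₀ : Polynomial ℚ := X ^ (p (Fin.last t)) * P with hQ₀
    have hQ₀0 : Q₀ ≠ 0 := mul_ne_zero (pow_ne_zero _ X_ne_zero) hP0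
    have hPnat : P.natDegree = (∑ i : Fin t, p (Fin.castSucc i)) + t :=
      natDegree_eq_of_degree_eq_some hPdeg
    set D : ℕ := p (Fin.last t) + ((∑ i : Fin t, p (Fin.castSucc i)) + t) with hD
    have hQ₀nat : Q₀.natDegree = D := by
      rw [hQ₀, natDegree_mul (pow_ne_zero _ X_ne_zero) hP0, natDegree_X_pow, hPnat]
    obtain ⟨Q, hQdeg, hQcoeff, hQeval⟩ := indef_aux D Q₀ (le_of_eq hQ₀nat)
    have hlc : Q₀.coeff D ≠ 0 := by
      rw [← hQ₀nat]
      exact leadingCoeff_ne_zero.mpr hQ₀0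
    have hQc : Q.coeff (D+1) ≠ 0 := by
      rw [hQcoeff]
      exact div_ne_zero hlc (by positivity)
    have hdeg : Q.degree = ((D + 1 : ℕ) : WithBot ℕ) :=
      le_antisymm hQdeg (le_degree_of_ne_zero hQc)
    have hsum : (∑ i : Fin (t+1), p i) + (t+1) = D + 1 := by
      rw [Fin.sum_univ_castSucc]
      omega
    refine ⟨Q, by rw [hdeg, hsum], ?_⟩
    intro n
    rw [comb_step t n p, hQeval]
    apply Finset.sum_congr rfl
    intro m _
    rw [hQ₀]
    simp [hPeval m]



/-- For positive integers `p 0, …, p (t-1)`, the function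
`n ↦ ∑_{0 ≤ k₁ < ⋯ < k_t ≤ n-1} k₁^{p₁} ⋯ k_t^{p_t}` agrees with a polynomial in `n`
of degree `∑ i, p i + t`. -/
theorem stmt_1 (t : ℕ) (ht : 0 < t) (p : Fin t → ℕ) (hp : ∀ i, 0 < p i) :
    ∃ Q : Polynomial ℚ, Q.degree = ((∑ i, p i) + t : ℕ) ∧
      ∀ n : ℕ, Q.eval (n : ℚ) =
        ∑ k ∈ Finset.univ.filter (fun k : Fin t → Fin n => ∀ i j, i < j → k i < k j),
          ∏ i, ((k i : ℕ) : ℚ) ^ p i :=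
  main_aux t p
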